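/- For every integer r ≥ 2 and integer d ≥ 0, every graph G with maximum degree at most d and chromatic number at most r has an orientation with no directed odd cycle in which every vertex has out-degree at most (1 − 1/(4r+1))·d + 1; consequently AT(G) ≤ (1 − 1/(4r+1))·d + 2. -/

import Mathlib

/-- An orientation of a simple graph: each edge gets exactly one direction. -/
structure GraphOrientation {V : Type*} (G : SimpleGraph V) where
  dir : V → V → Prop
  consistent : ∀ u v, G.Adj u v ↔ (dir u v ∨ dir v u)
  antisymm : ∀ u v, dir u v → ¬ dir v u

/-- The out-degree of a vertex in an orientation. -/
noncomputable def outDeg {V : Type*} {G : SimpleGraph V} (o : GraphOrientation G) (v : V) : ℕ :=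
  Nat.card {u : V // o.dir v u}

/-- The in-degree of a vertex in an orientation. -/
noncomputable def inDeg {V : Type*} {G : SimpleGraph V} (o : GraphOrientation G) (v : V) : ℕ :=
  Nat.card {u : V // o.dir u v}

/-- A spanning Eulerian subdigraph of an orientation, given by its set of directed edges:
every edge is an edge of the orientation, and every vertex has equal out- and in-degree. -/
def IsEulerian {V : Type*} {G : SimpleGraph V} (o : GraphOrientation G) (A : Finset (V × V)) : Prop :=
  (∀ p ∈ A, o.dir p.1 p.2) ∧
  ∀ v : V, Nat.card {p : V × V // p ∈ A ∧ p.1 = v} = Nat.card {p : V × V // p ∈ A ∧ p.2 = v}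

/-- The number of even Eulerian spanning subdigraphs. -/
noncomputable def EE {V : Type*} {G : SimpleGraph V} (o : GraphOrientation G) : ℕ :=
  Nat.card {A : Finset (V × V) // IsEulerian o A ∧ Even A.card}

/-- The number of odd Eulerian spanning subdigraphs. -/
noncomputable def EO {V : Type*} {G : SimpleGraph V} (o : GraphOrientation G) : ℕ :=
  Nat.card {A : Finset (V × V) // IsEulerian o A ∧ Odd A.card}

/-- An Alon–Tarsi orientation: the numbers of even and odd Eulerian subdigraphs differ. -/
def AlonTarsiOrientation {V : Type*} {G : SimpleGraph V} (o : GraphOrientation G) : Prop :=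
  EE o ≠ EO o

/-- A list `v :: l` is a directed cycle for the relation `dir` if its vertices are distinct
and `dir` holds along consecutive vertices, wrapping back to `v`. -/
def IsDirCycle {V : Type*} (dir : V → V → Prop) : List V → Prop
  | [] => False
  | v :: l => (v :: l).Nodup ∧ List.Chain dir v (l ++ [v])

/-- The relation `dir` admits some directed cycle. -/
def HasDirCycle {V : Type*} (dir : V → V → Prop) : Prop :=
  ∃ l : List V, IsDirCycle dir l

/-- The relation `dir` admits a directed cycle of odd length. -/
def HasOddDirCycle {V : Type*} (dir : V → V → Prop) : Prop :=
  ∃ l : List V, IsDirCycle dir l ∧ Odd l.length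

/-- The Alon–Tarsi number of `G`: the least `k` such that `G` has an Alon–Tarsi
orientation with all out-degrees `< k`. -/
noncomputable def ATNumber {V : Type*} (G : SimpleGraph V) : ℕ :=
  sInf {k : ℕ | ∃ o : GraphOrientation G, (∀ v, outDeg o v < k) ∧ AlonTarsiOrientation o}

set_option maxHeartbeats 1000000


open Finset in
open scoped Classical in
private lemma swapCount {α β : Type*} (X : Finset α) (Y : Finset β) (R : α → β → Prop) :
    ∑ x ∈ X, (Y.filter (fun y => R x y)).card = ∑ y ∈ Y, (X.filter (fun x => R x y)).card := by
  simp only [Finset.card_filter]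
  exact Finset.sum_comm

open scoped Classical in
private lemma natcard_filter {α : Type*} [Fintype α] (p : α → Prop) :
    Nat.card {u // p u} = (Finset.univ.filter p).card := by
  rw [Nat.card_eq_fintype_card, Fintype.card_subtype]

open scoped Classical in
private lemma natcard_finset_filter {α : Type*} [Fintype α] (A : Finset α) (q : α → Prop) :
    Nat.card {x // x ∈ A ∧ q x} = (A.filter q).card := by
  rw [natcard_filter]
  congr 1
  ext x
  simp

private lemma zmod2_ne {x y : ZMod 2} (h : x ≠ y) : y = x + 1 := by
  revert h; revert x y; decide

private lemma chainLe {α : Type*} {dir : α → α → Prop} {g : α → ℕ}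
    (hg : ∀ u v, dir u v → g u ≤ g v) :
    ∀ (l : List α) (a b : α), List.Chain dir a (l ++ [b]) → g a ≤ g b := by
  intro l
  induction l with
  | nil => intro a b h; rcases List.chain_cons.mp h with ⟨h1, _⟩; exact hg _ _ h1
  | cons c l ih =>
    intro a b h
    rcases List.chain_cons.mp h with ⟨h1, h2⟩
    exact le_trans (hg _ _ h1) (ih c b h2)

private lemma chainSig {α : Type*} {dir : α → α → Prop} {g : α → ℕ} {σ : α → ZMod 2}
    (hprop : ∀ u v, dir u v → g u < g v ∨ (g u = g v ∧ σ u ≠ σ v)) :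
    ∀ (l : List α) (a b : α), List.Chain dir a (l ++ [b]) → g b ≤ g a →
      σ b = σ a + ((l.length + 1 : ℕ) : ZMod 2) := by
  have hg : ∀ u v, dir u v → g u ≤ g v := by
    intro u v h
    rcases hprop u v h with h | ⟨h, _⟩
    · exact le_of_lt h
    · exact le_of_eq h
  intro l
  induction l with
  | nil =>
    intro a b h hba
    rcases List.chain_cons.mp h with ⟨h1, _⟩
    rcases hprop a b h1 with h2 | ⟨_, h3⟩
    · omega
    · simpa using zmod2_ne h3
  | cons c l ih =>
    intro a b h hba
    rcases List.chain_cons.mp h with ⟨h1, h2⟩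
    have gac : g a ≤ g c := hg _ _ h1
    have gcb : g c ≤ g b := chainLe hg l c b h2
    rcases hprop a c h1 with h3 | ⟨_, h4⟩
    · omega
    · have hsc : σ c = σ a + 1 := zmod2_ne h4
      have := ih c b h2 (by omega)
      rw [hsc] at this
      rw [this]
      have : ((l.length + 1 + 1 : ℕ) : ZMod 2) = ((l.length + 1 : ℕ) : ZMod 2) + 1 := by
        push_cast; ring
      simp only [List.length_cons]
      rw [this]
      ring

open Finset in
open scoped Classical in
private lemma eulerEven {α : Type*} [Fintype α] {dir : α → α → Prop} {g : α → ℕ} {σ : α → ZMod 2}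
    (hprop : ∀ u v, dir u v → g u < g v ∨ (g u = g v ∧ σ u ≠ σ v))
    (A : Finset (α × α)) (hA : ∀ p ∈ A, dir p.1 p.2)
    (hbal : ∀ v, (A.filter (fun p => p.1 = v)).card = (A.filter (fun p => p.2 = v)).card) :
    Even A.card := by
  have key : ∀ {M : Type} [AddCommMonoid M] (f : α → M),
      ∑ p ∈ A, f p.1 = ∑ p ∈ A, f p.2 := by
    intro M _ f
    have h1 : ∑ p ∈ A, f p.1
        = ∑ v ∈ univ, ∑ p ∈ A.filter (fun p => p.1 = v), f p.1 :=
      (Finset.sum_fiberwise_of_maps_to (fun p _ => mem_univ _) _).symm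
    have h2 : ∑ p ∈ A, f p.2
        = ∑ v ∈ univ, ∑ p ∈ A.filter (fun p => p.2 = v), f p.2 :=
      (Finset.sum_fiberwise_of_maps_to (fun p _ => mem_univ _) _).symm
    rw [h1, h2]
    apply Finset.sum_congr rfl
    intro v _
    have e1 : ∑ p ∈ A.filter (fun p => p.1 = v), f p.1
        = (A.filter (fun p => p.1 = v)).card • f v := by
      rw [← Finset.sum_const]
      apply Finset.sum_congr rfl
      intro p hp
      rw [(Finset.mem_filter.mp hp).2]
    have e2 : ∑ p ∈ A.filter (fun p => p.2 = v), f p.2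
        = (A.filter (fun p => p.2 = v)).card • f v := by
      rw [← Finset.sum_const]
      apply Finset.sum_congr rfl
      intro p hp
      rw [(Finset.mem_filter.mp hp).2]
    rw [e1, e2, hbal v]
  have st1 : ∑ p ∈ A, g p.1 = ∑ p ∈ A, g p.2 := key g
  have hle : ∀ p ∈ A, g p.1 ≤ g p.2 := by
    intro p hp
    rcases hprop _ _ (hA p hp) with h | ⟨h, _⟩
    · exact le_of_lt h
    · exact le_of_eq h
  have heq : ∀ p ∈ A, g p.1 = g p.2 := (Finset.sum_eq_sum_iff_of_le hle).mp st1
  have hstep : ∀ p ∈ A, σ p.2 = σ p.1 + 1 := by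
    intro p hp
    rcases hprop _ _ (hA p hp) with h | ⟨_, h2⟩
    · exact absurd (heq p hp) (by omega)
    · exact zmod2_ne h2
  have st2 : ∑ p ∈ A, σ p.1 = ∑ p ∈ A, σ p.2 := key σ
  have st3 : ∑ p ∈ A, σ p.2 = (∑ p ∈ A, σ p.1) + (A.card : ZMod 2) := by
    calc ∑ p ∈ A, σ p.2 = ∑ p ∈ A, (σ p.1 + 1) := Finset.sum_congr rfl hstep
    _ = (∑ p ∈ A, σ p.1) + (A.card : ZMod 2) := by
        rw [Finset.sum_add_distrib, Finset.sum_const, nsmul_eq_mul, mul_one]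
  have hzero : (A.card : ZMod 2) = 0 := by
    have := st2.trans st3
    exact (left_eq_add.mp this)
  have hdvd : 2 ∣ A.card := (ZMod.natCast_eq_zero_iff _ _).mp hzero
  rcases hdvd with ⟨k, hk⟩
  exact ⟨k, by omega⟩


open Finset in
open scoped Classical in
private lemma pairOrient {V : Type*} [Fintype V] (G : SimpleGraph V) (m : ℕ)
    (A B : Finset V) (hAB : Disjoint A B)
    (hA : ∀ a ∈ A, 2 * m ≤ (B.filter (fun b => G.Adj a b)).card)
    (hB : ∀ b ∈ B, 2 * m ≤ (A.filter (fun a => G.Adj a b)).card) :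
    ∃ e : V → V → Prop,
      (∀ u v, e u v → G.Adj u v ∧ ((u ∈ A ∧ v ∈ B) ∨ (u ∈ B ∧ v ∈ A))) ∧
      (∀ u v, u ∈ A → v ∈ B → G.Adj u v → (e u v ↔ ¬ e v u)) ∧
      (∀ v ∈ A ∪ B, m ≤ ((A ∪ B).filter (fun u => e u v)).card) := by
  set Eset : Finset (V × V) := (A ×ˢ B).filter (fun p => G.Adj p.1 p.2) with hEset
  have hEmem : ∀ p ∈ Eset, p.1 ∈ A ∧ p.2 ∈ B ∧ G.Adj p.1 p.2 := by
    intro p hp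
    rw [hEset, Finset.mem_filter, Finset.mem_product] at hp
    exact ⟨hp.1.1, hp.1.2, hp.2⟩
  set t : (↥(A ∪ B)) × Fin m → Finset (V × V) :=
    fun x => Eset.filter (fun p => p.1 = (x.1 : V) ∨ p.2 = (x.1 : V)) with ht
  -- Hall's condition
  have hall : ∀ s : Finset ((↥(A ∪ B)) × Fin m), s.card ≤ (s.biUnion t).card := by
    intro s
    set VS := s.image (fun x => (x.1.1 : V)) with hVS
    have h1 : s.card ≤ m * VS.card := by
      have : s.card ≤ (VS ×ˢ (Finset.univ : Finset (Fin m))).card := by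
        apply Finset.card_le_card_of_injOn (fun x => ((x.1.1 : V), x.2))
        · intro x hx
          rw [Finset.mem_coe, Finset.mem_product]
          exact ⟨Finset.mem_image_of_mem _ hx, Finset.mem_univ _⟩
        · intro x _ y _ hxy
          simp only [Prod.mk.injEq] at hxy
          exact Prod.ext (Subtype.ext hxy.1) hxy.2
      rw [Finset.card_product, Finset.card_univ, Fintype.card_fin] at this
      exact this.trans_eq (mul_comm _ _)
    -- each vertex of VS has its full incident edge set inside the biUnion
    have h2 : ∀ v ∈ VS, (s.biUnion t).filter (fun p => p.1 = v ∨ p.2 = v)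
        = Eset.filter (fun p => p.1 = v ∨ p.2 = v) := by
      intro v hv
      apply Finset.Subset.antisymm
      · apply Finset.filter_subset_filter
        intro p hp
        rcases Finset.mem_biUnion.mp hp with ⟨x, _, hx⟩
        exact Finset.mem_of_mem_filter p hx
      · rcases Finset.mem_image.mp hv with ⟨x, hxs, hxv⟩
        intro p hp
        rw [Finset.mem_filter]
        refine ⟨Finset.mem_biUnion.mpr ⟨x, hxs, ?_⟩, (Finset.mem_filter.mp hp).2⟩
        rw [ht]
        simpa [hxv] using hp
    have h3 : ∀ v ∈ VS, 2 * m ≤ (Eset.filter (fun p => p.1 = v ∨ p.2 = v)).card := by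
      intro v hv
      rcases Finset.mem_image.mp hv with ⟨x, _, hxv⟩
      have hvAB : v ∈ A ∪ B := hxv ▸ x.1.2
      rcases Finset.mem_union.mp hvAB with hvA | hvB
      · refine le_trans (hA v hvA) ?_
        apply Finset.card_le_card_of_injOn (fun b => (v, b))
        · intro b hb
          rcases Finset.mem_filter.mp hb with ⟨hbB, hadj⟩
          rw [Finset.mem_coe, Finset.mem_filter, hEset, Finset.mem_filter, Finset.mem_product]
          exact ⟨⟨⟨hvA, hbB⟩, hadj⟩, Or.inl rfl⟩
        · intro b _ b' _ h
          exact congrArg Prod.snd h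
      · refine le_trans (hB v hvB) ?_
        apply Finset.card_le_card_of_injOn (fun a => (a, v))
        · intro a ha
          rcases Finset.mem_filter.mp ha with ⟨haA, hadj⟩
          rw [Finset.mem_coe, Finset.mem_filter, hEset, Finset.mem_filter, Finset.mem_product]
          exact ⟨⟨⟨haA, hvB⟩, hadj⟩, Or.inr rfl⟩
        · intro a _ a' _ h
          exact congrArg Prod.fst h
    have h4 : ∑ v ∈ VS, ((s.biUnion t).filter (fun p => p.1 = v ∨ p.2 = v)).card
        ≤ 2 * (s.biUnion t).card := by
      rw [show ∑ v ∈ VS, ((s.biUnion t).filter (fun p => p.1 = v ∨ p.2 = v)).card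
          = ∑ p ∈ s.biUnion t, (VS.filter (fun v => p.1 = v ∨ p.2 = v)).card from by
        simp only [Finset.card_filter]; exact Finset.sum_comm]
      calc ∑ p ∈ s.biUnion t, (VS.filter (fun v => p.1 = v ∨ p.2 = v)).card
          ≤ ∑ _p ∈ s.biUnion t, 2 := by
            apply Finset.sum_le_sum
            intro p _
            calc (VS.filter (fun v => p.1 = v ∨ p.2 = v)).card
                ≤ ({p.1, p.2} : Finset V).card := by
                  apply Finset.card_le_card
                  intro v hv
                  rcases (Finset.mem_filter.mp hv).2 with h | h
                  · simp [h.symm]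
                  · simp [h.symm]
              _ ≤ 2 := Finset.card_insert_le _ _ |>.trans (by simp)
        _ = 2 * (s.biUnion t).card := by rw [Finset.sum_const, smul_eq_mul, mul_comm]
    have h5 : 2 * (m * VS.card) ≤ 2 * (s.biUnion t).card := by
      calc 2 * (m * VS.card) = ∑ _v ∈ VS, 2 * m := by
            rw [Finset.sum_const, smul_eq_mul]; ring
        _ ≤ ∑ v ∈ VS, ((s.biUnion t).filter (fun p => p.1 = v ∨ p.2 = v)).card := by
            apply Finset.sum_le_sum
            intro v hv
            rw [h2 v hv]
            exact h3 v hv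
        _ ≤ 2 * (s.biUnion t).card := h4
    have := Nat.le_of_mul_le_mul_left h5 (by norm_num)
    omega
  obtain ⟨f, finj, hft⟩ := (Finset.all_card_le_biUnion_card_iff_exists_injective t).mp hall
  have hfE : ∀ x, f x ∈ Eset := fun x => Finset.mem_of_mem_filter _ (hft x)
  have hfinc : ∀ x, (f x).1 = (x.1 : V) ∨ (f x).2 = (x.1 : V) :=
    fun x => (Finset.mem_filter.mp (hft x)).2
  have hdisj : ∀ v, v ∈ A → v ∈ B → False := by
    intro v h1 h2
    exact Finset.disjoint_left.mp hAB h1 h2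
  -- the claim relation
  set claim : V → V → Prop :=
    fun a b => ∃ (h : a ∈ A ∪ B) (i : Fin m), f (⟨a, h⟩, i) = (a, b) with hclaim
  obtain ⟨e, he⟩ : ∃ e' : V → V → Prop, e' = fun u v => G.Adj u v ∧
      ((u ∈ A ∧ v ∈ B ∧ ¬ claim u v) ∨ (u ∈ B ∧ v ∈ A ∧ claim v u)) := ⟨_, rfl⟩
  have he1 : ∀ u v, e u v → G.Adj u v ∧ ((u ∈ A ∧ v ∈ B) ∨ (u ∈ B ∧ v ∈ A)) := by
    intro u v huv
    rw [he] at huv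
    rcases huv with ⟨hadj, h | h⟩
    · exact ⟨hadj, Or.inl ⟨h.1, h.2.1⟩⟩
    · exact ⟨hadj, Or.inr ⟨h.1, h.2.1⟩⟩
  refine ⟨e, he1, ?_, ?_⟩
  · -- completeness
    intro u v huA hvB hadj
    have heuv : e u v ↔ ¬ claim u v := by
      rw [he]
      constructor
      · rintro ⟨_, h | h⟩
        · exact h.2.2
        · exact absurd h.1 (fun hB' => hdisj u huA hB')
      · intro h
        exact ⟨hadj, Or.inl ⟨huA, hvB, h⟩⟩
    have hevu : e v u ↔ claim u v := by
      rw [he]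
      constructor
      · rintro ⟨_, h | h⟩
        · exact absurd h.1 (fun hA' => hdisj v hA' hvB)
        · exact h.2.2
      · intro h
        exact ⟨hadj.symm, Or.inr ⟨hvB, huA, h⟩⟩
    rw [heuv, hevu]
  · -- in-degree at least m
    intro v hv
    rcases Finset.mem_union.mp hv with hvA | hvB
    · -- v ∈ A : claimed edges point into v
      have hfst : ∀ i : Fin m, (f (⟨v, hv⟩, i)).1 = v := by
        intro i
        rcases hfinc (⟨v, hv⟩, i) with h | h
        · exact h
        · exfalso
          have := (hEmem _ (hfE (⟨v, hv⟩, i))).2.1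
          rw [h] at this
          exact hdisj v hvA this
      have hmap : ∀ i : Fin m, (f (⟨v, hv⟩, i)).2 ∈ A ∪ B ∧ e (f (⟨v, hv⟩, i)).2 v := by
        intro i
        have hmem := hEmem _ (hfE (⟨v, hv⟩, i))
        set b := (f (⟨v, hv⟩, i)).2 with hb
        have hbB : b ∈ B := hmem.2.1
        have hcl : claim v b := by
          refine ⟨hv, i, ?_⟩
          have : f (⟨v, hv⟩, i) = ((f (⟨v, hv⟩, i)).1, (f (⟨v, hv⟩, i)).2) := rfl
          rw [this, hfst i]
        have hadj : G.Adj v b := by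
          have := hmem.2.2
          rwa [hfst i] at this
        refine ⟨Finset.mem_union_right _ hbB, ?_⟩
        rw [he]
        exact ⟨hadj.symm, Or.inr ⟨hbB, hvA, hcl⟩⟩
      have hinj : Function.Injective (fun i : Fin m => (f (⟨v, hv⟩, i)).2) := by
        intro i j hij
        dsimp only at hij
        have heqf : f (⟨v, hv⟩, i) = f (⟨v, hv⟩, j) := by
          have e1 : f (⟨v, hv⟩, i) = ((f (⟨v, hv⟩, i)).1, (f (⟨v, hv⟩, i)).2) := rfl
          have e2 : f (⟨v, hv⟩, j) = ((f (⟨v, hv⟩, j)).1, (f (⟨v, hv⟩, j)).2) := rfl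
          rw [e1, e2, hfst i, hfst j, hij]
        have := finj heqf
        exact congrArg Prod.snd this
      have hm : ((Finset.univ : Finset (Fin m))).card = m := by simp
      rw [← hm]
      apply Finset.card_le_card_of_injOn _ ?_ (fun i _ j _ h => hinj h)
      intro i _
      exact Finset.mem_filter.mpr (hmap i)
    · -- v ∈ B : edges claimed by v point into v
      have hsnd : ∀ i : Fin m, (f (⟨v, hv⟩, i)).2 = v := by
        intro i
        rcases hfinc (⟨v, hv⟩, i) with h | h
        · exfalso
          have := (hEmem _ (hfE (⟨v, hv⟩, i))).1
          rw [h] at this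
          exact hdisj v this hvB
        · exact h
      have hmap : ∀ i : Fin m, (f (⟨v, hv⟩, i)).1 ∈ A ∪ B ∧ e (f (⟨v, hv⟩, i)).1 v := by
        intro i
        have hmem := hEmem _ (hfE (⟨v, hv⟩, i))
        set a := (f (⟨v, hv⟩, i)).1 with ha
        have haA : a ∈ A := hmem.1
        have hncl : ¬ claim a v := by
          rintro ⟨h, j, hj⟩
          have : f (⟨a, h⟩, j) = f (⟨v, hv⟩, i) := by
            rw [hj]
            have e1 : f (⟨v, hv⟩, i) = ((f (⟨v, hv⟩, i)).1, (f (⟨v, hv⟩, i)).2) := rfl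
            rw [e1, hsnd i]
          have := finj this
          have hav : a = v := congrArg (fun x => (x.1 : V)) this
          exact hdisj v (hav ▸ haA) hvB
        have hadj : G.Adj a v := by
          have := hmem.2.2
          rwa [hsnd i] at this
        refine ⟨Finset.mem_union_left _ haA, ?_⟩
        rw [he]
        exact ⟨hadj, Or.inl ⟨haA, hvB, hncl⟩⟩
      have hinj : Function.Injective (fun i : Fin m => (f (⟨v, hv⟩, i)).1) := by
        intro i j hij
        dsimp only at hij
        have heqf : f (⟨v, hv⟩, i) = f (⟨v, hv⟩, j) := by
          have e1 : f (⟨v, hv⟩, i) = ((f (⟨v, hv⟩, i)).1, (f (⟨v, hv⟩, i)).2) := rfl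
          have e2 : f (⟨v, hv⟩, j) = ((f (⟨v, hv⟩, j)).1, (f (⟨v, hv⟩, j)).2) := rfl
          rw [e1, e2, hsnd i, hsnd j, hij]
        have := finj heqf
        exact congrArg Prod.snd this
      have hm : ((Finset.univ : Finset (Fin m))).card = m := by simp
      rw [← hm]
      apply Finset.card_le_card_of_injOn _ ?_ (fun i _ j _ h => hinj h)
      intro i _
      exact Finset.mem_filter.mpr (hmap i)
open Finset in
open scoped Classical in
private lemma cleanLemma {V : Type*} [Fintype V] (G : SimpleGraph V) (t : ℕ) :
    ∀ (n : ℕ) (X Y : Finset V), X.card + Y.card ≤ n →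
    t * (X.card + Y.card) ≤ ∑ x ∈ X, (Y.filter (fun y => G.Adj x y)).card →
    0 < ∑ x ∈ X, (Y.filter (fun y => G.Adj x y)).card →
    ∃ A ⊆ X, ∃ B ⊆ Y, A.Nonempty ∧
      (∀ a ∈ A, t ≤ (B.filter (fun b => G.Adj a b)).card) ∧
      (∀ b ∈ B, t ≤ (A.filter (fun a => G.Adj a b)).card) := by
  intro n
  induction n with
  | zero =>
    intro X Y hn _ h2
    have hX : X = ∅ := Finset.card_eq_zero.mp (by omega)
    rw [hX] at h2
    simp at h2
  | succ n ih =>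
    intro X Y hn h1 h2
    by_cases hX : ∀ a ∈ X, t ≤ (Y.filter (fun y => G.Adj a y)).card
    · by_cases hY : ∀ b ∈ Y, t ≤ (X.filter (fun x => G.Adj x b)).card
      · refine ⟨X, Finset.Subset.refl _, Y, Finset.Subset.refl _, ?_, hX, hY⟩
        by_contra hXe
        rw [Finset.not_nonempty_iff_eq_empty] at hXe
        rw [hXe] at h2
        simp at h2
      · push_neg at hY
        obtain ⟨b, hbY, hblt⟩ := hY
        set Y' := Y.erase b with hY'
        have hYc : Y.card = Y'.card + 1 := by
          rw [hY', Finset.card_erase_of_mem hbY]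
          have : 0 < Y.card := Finset.card_pos.mpr ⟨b, hbY⟩
          omega
        have hsumY : ∑ x ∈ X, (Y.filter (fun y => G.Adj x y)).card
            = ∑ y ∈ Y, (X.filter (fun x => G.Adj x y)).card := swapCount X Y _
        have hsumY' : ∑ x ∈ X, (Y'.filter (fun y => G.Adj x y)).card
            = ∑ y ∈ Y', (X.filter (fun x => G.Adj x y)).card := swapCount X Y' _
        have herase : (∑ y ∈ Y', (X.filter (fun x => G.Adj x y)).card)
            + (X.filter (fun x => G.Adj x b)).card
            = ∑ y ∈ Y, (X.filter (fun x => G.Adj x y)).card :=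
          Finset.sum_erase_add Y _ hbY
        have hmul : t * (X.card + Y.card) = t * (X.card + Y'.card) + t := by
          rw [hYc]; ring
        have h1' : t * (X.card + Y'.card) ≤ ∑ x ∈ X, (Y'.filter (fun y => G.Adj x y)).card := by
          rw [hsumY']
          rw [hsumY] at h1
          omega
        have h2' : 0 < ∑ x ∈ X, (Y'.filter (fun y => G.Adj x y)).card := by
          rw [hsumY']
          rw [hsumY] at h1
          rw [hmul] at h1
          omega
        obtain ⟨A, hAX, B, hBY', rest⟩ := ih X Y' (by omega) h1' h2'
        exact ⟨A, hAX, B, hBY'.trans (Finset.erase_subset _ _), rest⟩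
    · push_neg at hX
      obtain ⟨a, haX, halt⟩ := hX
      set X' := X.erase a with hX'
      have hXc : X.card = X'.card + 1 := by
        rw [hX', Finset.card_erase_of_mem haX]
        have : 0 < X.card := Finset.card_pos.mpr ⟨a, haX⟩
        omega
      have herase : (∑ x ∈ X', (Y.filter (fun y => G.Adj x y)).card)
          + (Y.filter (fun y => G.Adj a y)).card
          = ∑ x ∈ X, (Y.filter (fun y => G.Adj x y)).card :=
        Finset.sum_erase_add X _ haX
      have hmul : t * (X.card + Y.card) = t * (X'.card + Y.card) + t := by
        rw [hXc]; ring
      have h1' : t * (X'.card + Y.card) ≤ ∑ x ∈ X', (Y.filter (fun y => G.Adj x y)).card := by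
        omega
      have h2' : 0 < ∑ x ∈ X', (Y.filter (fun y => G.Adj x y)).card := by
        rw [hmul] at h1
        omega
      obtain ⟨A, hAX', B, hBY, rest⟩ := ih X' Y (by omega) h1' h2'
      exact ⟨A, hAX'.trans (Finset.erase_subset _ _), B, hBY, rest⟩
section
open Finset
open scoped Classical

variable {V : Type*} [Fintype V] (G : SimpleGraph V)

private lemma stepLemma (r d m : ℕ) (hmd : m * (4 * r + 1) ≤ d) (hcol : G.Colorable r)
    (hdeg : ∀ v : V, ((Finset.univ : Finset V).filter (fun u => G.Adj v u)).card ≤ d)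
    (W : Finset V) (hW : W.Nonempty) :
    ∃ (S : Finset V) (e : V → V → Prop) (σ : V → ZMod 2),
      S.Nonempty ∧ S ⊆ W ∧
      (∀ u v, e u v → u ∈ S ∧ v ∈ S ∧ G.Adj u v ∧ σ u ≠ σ v) ∧
      (∀ u v, u ∈ S → v ∈ S → G.Adj u v → (e u v ↔ ¬ e v u)) ∧
      (∀ v ∈ S, (W.filter (fun u => G.Adj v u)).card
          ≤ (d - m) + (S.filter (fun u => e u v)).card) := by
  have hdegW : ∀ v : V, (W.filter (fun u => G.Adj v u)).card ≤ d := by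
    intro v
    exact le_trans (Finset.card_le_card (Finset.filter_subset_filter _ (Finset.subset_univ W)))
      (hdeg v)
  by_cases hsing : ∃ v ∈ W, (W.filter (fun u => G.Adj v u)).card ≤ d - m
  · obtain ⟨v, hvW, hvdeg⟩ := hsing
    refine ⟨{v}, fun _ _ => False, fun _ => 0, Finset.singleton_nonempty v,
      Finset.singleton_subset_iff.mpr hvW, by simp, ?_, ?_⟩
    · intro u w hu hw hadj
      rw [Finset.mem_singleton] at hu hw
      exact absurd (hu ▸ hw ▸ hadj) (G.irrefl)
    · intro u hu
      rw [Finset.mem_singleton] at hu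
      subst hu
      exact le_trans hvdeg (Nat.le_add_right _ _)
  · push_neg at hsing
    have hm1 : 1 ≤ m := by
      by_contra hm0
      obtain ⟨v, hvW⟩ := hW
      have h1 := hsing v hvW
      have h2 := hdegW v
      omega
    obtain ⟨C⟩ := hcol
    set Cl : Fin r → Finset V := fun i => W.filter (fun v => C v = i) with hCl
    have hClW : ∀ i, Cl i ⊆ W := fun i => Finset.filter_subset _ _
    have hClind : ∀ i, ∀ u ∈ Cl i, ∀ v ∈ Cl i, ¬ G.Adj u v := by
      intro i u hu v hv hadj
      rw [hCl, Finset.mem_filter] at hu hv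
      exact C.valid hadj (hu.2.trans hv.2.symm)
    -- total degree sum over color pairs
    have H0 : ∑ i, (Cl i).card = W.card :=
      (Finset.card_eq_sum_card_fiberwise (fun v _ => Finset.mem_univ (C v))).symm
    have Hinner : ∀ x : V, ∑ j, ((Cl j).filter (fun y => G.Adj x y)).card
        = (W.filter (fun y => G.Adj x y)).card := by
      intro x
      have : ∀ j, (Cl j).filter (fun y => G.Adj x y)
          = (W.filter (fun y => G.Adj x y)).filter (fun v => C v = j) := by
        intro j
        rw [hCl]
        ext y
        simp only [Finset.mem_filter]
        tauto
      rw [Finset.sum_congr rfl (fun j _ => by rw [this j])]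
      exact (Finset.card_eq_sum_card_fiberwise (fun v _ => Finset.mem_univ (C v))).symm
    have H1 : ∑ i, ∑ j, ∑ x ∈ Cl i, ((Cl j).filter (fun y => G.Adj x y)).card
        = ∑ v ∈ W, (W.filter (fun y => G.Adj v y)).card := by
      have e1 : ∀ i, ∑ j, ∑ x ∈ Cl i, ((Cl j).filter (fun y => G.Adj x y)).card
          = ∑ x ∈ Cl i, (W.filter (fun y => G.Adj x y)).card := by
        intro i
        rw [Finset.sum_comm]
        exact Finset.sum_congr rfl (fun x _ => Hinner x)
      rw [Finset.sum_congr rfl (fun i _ => e1 i)]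
      have : ∀ i, ∑ x ∈ Cl i, (W.filter (fun y => G.Adj x y)).card
          = ∑ x ∈ W.filter (fun v => C v = i), (W.filter (fun y => G.Adj x y)).card := by
        intro i; rw [hCl]
      rw [Finset.sum_congr rfl (fun i _ => this i)]
      exact Finset.sum_fiberwise_of_maps_to (fun v _ => Finset.mem_univ (C v)) _
    have H2 : (d - m + 1) * W.card ≤ ∑ v ∈ W, (W.filter (fun y => G.Adj v y)).card := by
      calc (d - m + 1) * W.card = W.card * (d - m + 1) := mul_comm _ _
        _ = ∑ _v ∈ W, (d - m + 1) := by rw [Finset.sum_const, smul_eq_mul]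
        _ ≤ ∑ v ∈ W, (W.filter (fun y => G.Adj v y)).card := by
            apply Finset.sum_le_sum
            intro v hv
            have := hsing v hv
            omega
    have H3 : ∑ (i : Fin r), ∑ (j : Fin r), 2 * m * ((Cl i).card + (Cl j).card)
        = 4 * m * r * W.card := by
      have : ∀ i : Fin r, ∑ (j : Fin r), ((Cl i).card + (Cl j).card)
          = r * (Cl i).card + W.card := by
        intro i
        rw [Finset.sum_add_distrib, Finset.sum_const, H0, Finset.card_univ, Fintype.card_fin,
          smul_eq_mul]
      calc ∑ (i : Fin r), ∑ (j : Fin r), 2 * m * ((Cl i).card + (Cl j).card)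
          = ∑ (i : Fin r), 2 * m * (r * (Cl i).card + W.card) := by
            apply Finset.sum_congr rfl
            intro i _
            rw [← Finset.mul_sum, this i]
        _ = 2 * m * (r * W.card + r * W.card) := by
            rw [← Finset.mul_sum, Finset.sum_add_distrib, ← Finset.mul_sum, H0,
              Finset.sum_const, Finset.card_univ, Fintype.card_fin, smul_eq_mul]
        _ = 4 * m * r * W.card := by ring
    -- find a good pair of colour classes
    have hkey : 4 * m * r < d - m + 1 := by
      have : m * (4 * r + 1) = 4 * m * r + m := by ring
      omega
    have hWpos : 0 < W.card := Finset.card_pos.mpr hW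
    have hlt : ∑ (i : Fin r), ∑ (j : Fin r), 2 * m * ((Cl i).card + (Cl j).card)
        < ∑ i, ∑ j, ∑ x ∈ Cl i, ((Cl j).filter (fun y => G.Adj x y)).card := by
      rw [H3, H1]
      calc 4 * m * r * W.card < (d - m + 1) * W.card := by
            exact (Nat.mul_lt_mul_right hWpos).mpr hkey
        _ ≤ _ := H2
    have hpair : ∃ i j : Fin r, 2 * m * ((Cl i).card + (Cl j).card)
        < ∑ x ∈ Cl i, ((Cl j).filter (fun y => G.Adj x y)).card := by
      by_contra hno
      push_neg at hno
      have : ∑ i, ∑ j, ∑ x ∈ Cl i, ((Cl j).filter (fun y => G.Adj x y)).card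
          ≤ ∑ (i : Fin r), ∑ (j : Fin r), 2 * m * ((Cl i).card + (Cl j).card) :=
        Finset.sum_le_sum (fun i _ => Finset.sum_le_sum (fun j _ => hno i j))
      omega
    obtain ⟨i, j, hij⟩ := hpair
    -- clean the pair
    obtain ⟨A, hACl, B, hBCl, hAne, hA2m, hB2m⟩ := cleanLemma G (2 * m)
      ((Cl i).card + (Cl j).card) (Cl i) (Cl j) le_rfl (le_of_lt hij)
      (lt_of_le_of_lt (Nat.zero_le _) hij)
    have hij : i ≠ j := by
      intro hijeq
      subst hijeq
      have : ∑ x ∈ Cl i, ((Cl i).filter (fun y => G.Adj x y)).card = 0 := by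
        apply Finset.sum_eq_zero
        intro x hx
        rw [Finset.card_eq_zero]
        rw [Finset.filter_eq_empty_iff]
        intro y hy
        exact hClind i x hx y hy
      omega
    have hDisj : Disjoint A B := by
      rw [Finset.disjoint_left]
      intro v hvA hvB
      have h1 := hACl hvA
      have h2 := hBCl hvB
      rw [hCl, Finset.mem_filter] at h1 h2
      exact hij (h1.2.symm.trans h2.2)
    obtain ⟨e, he1, hcompAB, hins⟩ := pairOrient G m A B hDisj hA2m hB2m
    set S := A ∪ B with hS
    have hSW : S ⊆ W := Finset.union_subset ((hACl).trans (hClW i)) ((hBCl).trans (hClW j))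
    refine ⟨S, e, fun v => if v ∈ B then 1 else 0, ?_, hSW, ?_, ?_, ?_⟩
    · exact hAne.mono (Finset.subset_union_left)
    · intro u v huv
      obtain ⟨hadj, hside⟩ := he1 u v huv
      have hDuB : ∀ x, x ∈ A → x ∉ B := fun x hx => Finset.disjoint_left.mp hDisj hx
      rcases hside with ⟨huA, hvB⟩ | ⟨huB, hvA⟩
      · refine ⟨Finset.mem_union_left _ huA, Finset.mem_union_right _ hvB, hadj, ?_⟩
        show (if u ∈ B then (1 : ZMod 2) else 0) ≠ (if v ∈ B then (1 : ZMod 2) else 0)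
        rw [if_neg (hDuB u huA), if_pos hvB]
        decide
      · refine ⟨Finset.mem_union_right _ huB, Finset.mem_union_left _ hvA, hadj, ?_⟩
        show (if u ∈ B then (1 : ZMod 2) else 0) ≠ (if v ∈ B then (1 : ZMod 2) else 0)
        rw [if_pos huB, if_neg (hDuB v hvA)]
        decide
    · intro u v hu hv hadj
      rcases Finset.mem_union.mp hu with huA | huB
      · rcases Finset.mem_union.mp hv with hvA | hvB
        · exact absurd hadj (hClind i u (hACl huA) v (hACl hvA))
        · exact hcompAB u v huA hvB hadj
      · rcases Finset.mem_union.mp hv with hvA | hvB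
        · have := hcompAB v u hvA huB hadj.symm
          tauto
        · exact absurd hadj (hClind j u (hBCl huB) v (hBCl hvB))
    · intro v hv
      have h1 := hins v hv
      have h2 := hdegW v
      omega
private lemma buildLemma (r d m : ℕ) (hmd : m * (4 * r + 1) ≤ d) (hcol : G.Colorable r)
    (hdeg : ∀ v : V, ((Finset.univ : Finset V).filter (fun u => G.Adj v u)).card ≤ d) :
    ∀ (n : ℕ) (W : Finset V), W.card ≤ n →
    ∃ (dir : V → V → Prop) (g : V → ℕ) (σ : V → ZMod 2),
      (∀ u v, dir u v → u ∈ W ∧ v ∈ W ∧ G.Adj u v) ∧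
      (∀ u v, u ∈ W → v ∈ W → G.Adj u v → (dir u v ↔ ¬ dir v u)) ∧
      (∀ v, ((Finset.univ : Finset V).filter (fun u => dir v u)).card ≤ d - m) ∧
      (∀ u v, dir u v → g u < g v ∨ (g u = g v ∧ σ u ≠ σ v)) := by
  intro n
  induction n with
  | zero =>
    intro W hn
    refine ⟨fun _ _ => False, fun _ => 0, fun _ => 0, ?_, ?_, by simp, by simp⟩
    · intro u v hu; exact hu.elim
    · intro u v hu
      have : W = ∅ := Finset.card_eq_zero.mp (by omega)
      subst this
      simp at hu
  | succ n ih =>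
    intro W hn
    rcases W.eq_empty_or_nonempty with hWe | hWne
    · subst hWe
      refine ⟨fun _ _ => False, fun _ => 0, fun _ => 0, ?_, ?_, by simp, by simp⟩
      · intro u v hu; exact hu.elim
      · intro u v hu; simp at hu
    obtain ⟨S, e, σS, hSne, hSW, he, hcomp, hout⟩ :=
      stepLemma G r d m hmd hcol hdeg W hWne
    set W' := W \ S with hW'
    have hW'W : W' ⊆ W := Finset.sdiff_subset
    have hW'S : ∀ x, x ∈ W' → x ∉ S := fun x hx => (Finset.mem_sdiff.mp hx).2
    have hSnotW' : ∀ x, x ∈ S → x ∉ W' := fun x hx hx' => hW'S x hx' hx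
    have hW'card : W'.card ≤ n := by
      obtain ⟨s0, hs0⟩ := hSne
      have hss : W' ⊂ W := by
        refine Finset.ssubset_iff_of_subset hW'W |>.mpr ⟨s0, hSW hs0, ?_⟩
        intro hmem
        exact hW'S s0 hmem hs0
      have := Finset.card_lt_card hss
      omega
    obtain ⟨dir', g', σ', ih1, ih2, ih3, ih4⟩ := ih W' hW'card
    obtain ⟨dir2, hdir2⟩ : ∃ D : V → V → Prop, ∀ x y,
        D x y ↔ ((x ∈ S ∧ y ∈ W' ∧ G.Adj x y) ∨ e x y ∨ dir' x y) :=
      ⟨_, fun _ _ => Iff.rfl⟩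
    obtain ⟨g2, hg2⟩ : ∃ g2 : V → ℕ, ∀ x, g2 x = if x ∈ S then 0 else g' x + 1 :=
      ⟨_, fun _ => rfl⟩
    obtain ⟨σ2, hσ2⟩ : ∃ s2 : V → ZMod 2, ∀ x, s2 x = if x ∈ S then σS x else σ' x :=
      ⟨_, fun _ => rfl⟩
    have hDS : ∀ x y, x ∈ S → y ∈ S → (dir2 x y ↔ e x y) := by
      intro x y hx hy
      rw [hdir2]
      constructor
      · rintro (⟨_, h2, _⟩ | h | h)
        · exact absurd hy (hW'S y h2)
        · exact h
        · exact absurd hx (hW'S x (ih1 x y h).1)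
      · intro h
        exact Or.inr (Or.inl h)
    have hDW' : ∀ x y, x ∉ S → (dir2 x y ↔ dir' x y) := by
      intro x y hx
      rw [hdir2]
      constructor
      · rintro (⟨h2, _, _⟩ | h | h)
        · exact absurd h2 hx
        · exact absurd (he x y h).1 hx
        · exact h
      · intro h
        exact Or.inr (Or.inr h)
    refine ⟨dir2, g2, σ2, ?_, ?_, ?_, ?_⟩
    · intro u v huv
      rcases (hdir2 u v).mp huv with ⟨h1, h2, h3⟩ | h | h
      · exact ⟨hSW h1, hW'W h2, h3⟩
      · obtain ⟨h1, h2, h3, _⟩ := he u v h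
        exact ⟨hSW h1, hSW h2, h3⟩
      · obtain ⟨h1, h2, h3⟩ := ih1 u v h
        exact ⟨hW'W h1, hW'W h2, h3⟩
    · intro u v hu hv hadj
      by_cases huS : u ∈ S
      · by_cases hvS : v ∈ S
        · rw [hDS u v huS hvS, hDS v u hvS huS]
          exact hcomp u v huS hvS hadj
        · have hvW' : v ∈ W' := Finset.mem_sdiff.mpr ⟨hv, hvS⟩
          have hfwd : dir2 u v := (hdir2 u v).mpr (Or.inl ⟨huS, hvW', hadj⟩)
          have hbwd : ¬ dir2 v u := by
            rw [hdir2]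
            rintro (⟨h1, _, _⟩ | h | h)
            · exact hvS h1
            · exact hvS (he v u h).1
            · exact hSnotW' u huS (ih1 v u h).2.1
          exact iff_of_true hfwd hbwd
      · by_cases hvS : v ∈ S
        · have huW' : u ∈ W' := Finset.mem_sdiff.mpr ⟨hu, huS⟩
          have hfwd : dir2 v u := (hdir2 v u).mpr (Or.inl ⟨hvS, huW', hadj.symm⟩)
          have hbwd : ¬ dir2 u v := by
            rw [hdir2]
            rintro (⟨h1, _, _⟩ | h | h)
            · exact huS h1
            · exact huS (he u v h).1
            · exact hSnotW' v hvS (ih1 u v h).2.1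
          exact iff_of_false hbwd (not_not_intro hfwd)
        · have huW' : u ∈ W' := Finset.mem_sdiff.mpr ⟨hu, huS⟩
          have hvW' : v ∈ W' := Finset.mem_sdiff.mpr ⟨hv, hvS⟩
          rw [hDW' u v huS, hDW' v u hvS]
          exact ih2 u v huW' hvW' hadj
    · intro v
      by_cases hvS : v ∈ S
      · have hsplit : (Finset.univ : Finset V).filter (fun u => dir2 v u)
            = (W'.filter (fun u => G.Adj v u)) ∪ (S.filter (fun u => e v u)) := by
          ext u
          simp only [Finset.mem_filter, Finset.mem_univ, true_and, Finset.mem_union, hdir2]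
          constructor
          · rintro (⟨_, h2, h3⟩ | h | h)
            · exact Or.inl ⟨h2, h3⟩
            · exact Or.inr ⟨(he v u h).2.1, h⟩
            · exact absurd hvS (hW'S v (ih1 v u h).1)
          · rintro (⟨h1, h2⟩ | ⟨h1, h2⟩)
            · exact Or.inl ⟨hvS, h1, h2⟩
            · exact Or.inr (Or.inl h2)
        rw [hsplit]
        have hdisj2 : Disjoint (W'.filter (fun u => G.Adj v u)) (S.filter (fun u => e v u)) := by
          rw [Finset.disjoint_left]
          intro x hx1 hx2
          exact hW'S x (Finset.mem_filter.mp hx1).1 (Finset.mem_filter.mp hx2).1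
        rw [Finset.card_union_of_disjoint hdisj2]
        have hSpart : (S.filter (fun u => G.Adj v u)).card
            = (S.filter (fun u => e v u)).card + (S.filter (fun u => e u v)).card := by
          rw [← Finset.card_union_of_disjoint ?hd]
          case hd =>
            rw [Finset.disjoint_left]
            intro x hx1 hx2
            have h1 := (Finset.mem_filter.mp hx1).2
            have h2 := (Finset.mem_filter.mp hx2).2
            have hx := (Finset.mem_filter.mp hx1).1
            exact (hcomp v x hvS hx ((he v x h1).2.2.1)).mp h1 h2
          congr 1
          ext u
          simp only [Finset.mem_filter, Finset.mem_union]
          constructor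
          · rintro ⟨h1, h2⟩
            by_cases hevu : e v u
            · exact Or.inl ⟨h1, hevu⟩
            · refine Or.inr ⟨h1, ?_⟩
              by_contra heuv
              exact hevu ((hcomp v u hvS h1 h2).mpr heuv)
          · rintro (⟨h1, h2⟩ | ⟨h1, h2⟩)
            · exact ⟨h1, (he v u h2).2.2.1⟩
            · exact ⟨h1, ((he u v h2).2.2.1).symm⟩
        have hWsplit : (W.filter (fun u => G.Adj v u)).card
            = (W'.filter (fun u => G.Adj v u)).card + (S.filter (fun u => G.Adj v u)).card := by
          rw [← Finset.card_union_of_disjoint ?hd2]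
          case hd2 =>
            rw [Finset.disjoint_left]
            intro x hx1 hx2
            exact hW'S x (Finset.mem_filter.mp hx1).1 (Finset.mem_filter.mp hx2).1
          congr 1
          rw [← Finset.filter_union]
          congr 1
          exact (Finset.sdiff_union_of_subset hSW).symm
        have hb := hout v hvS
        omega
      · have heq : (Finset.univ : Finset V).filter (fun u => dir2 v u)
            = (Finset.univ : Finset V).filter (fun u => dir' v u) := by
          ext u
          simp only [Finset.mem_filter, Finset.mem_univ, true_and]
          exact hDW' v u hvS
        rw [heq]
        exact ih3 v
    · intro u v huv
      rcases (hdir2 u v).mp huv with ⟨h1, h2, _⟩ | h | h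
      · rw [hg2, hg2, if_pos h1, if_neg (hW'S v h2)]
        left
        omega
      · obtain ⟨h1, h2, _, h4⟩ := he u v h
        right
        rw [hg2, hg2, hσ2, hσ2, if_pos h1, if_pos h2, if_pos h1, if_pos h2]
        exact ⟨rfl, h4⟩
      · obtain ⟨h1, h2, _⟩ := ih1 u v h
        rw [hg2, hg2, hσ2, hσ2, if_neg (hW'S u h1), if_neg (hW'S v h2),
          if_neg (hW'S u h1), if_neg (hW'S v h2)]
        rcases ih4 u v h with h5 | ⟨h5, h6⟩
        · left; omega
        · right; exact ⟨by omega, h6⟩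

end

/-- For integers `r ≥ 2`, `d ≥ 0`, every graph of maximum degree at most
`d` and chromatic number at most `r` has an orientation with no directed odd cycle and all
out-degrees at most `(1 - 1/(4r+1))·d + 1`; consequently `AT(G) ≤ (1 - 1/(4r+1))·d + 2`. -/
theorem statement4 (r d : ℕ) (hr : 2 ≤ r) {V : Type*} [Fintype V] (G : SimpleGraph V)
    [DecidableRel G.Adj] (hdeg : ∀ v, G.degree v ≤ d) (hcol : G.Colorable r) :
    (∃ o : GraphOrientation G, ¬ HasOddDirCycle o.dir ∧
      ∀ v, (outDeg o v : ℝ) ≤ (1 - 1 / (4 * r + 1)) * d + 1) ∧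
    (ATNumber G : ℝ) ≤ (1 - 1 / (4 * r + 1)) * d + 2 := by
  set q : ℕ := 4 * r + 1 with hq
  set m : ℕ := d / q with hm
  have hq1 : 1 ≤ q := by omega
  have hmd : m * (4 * r + 1) ≤ d := by
    rw [hm, hq]
    exact Nat.div_mul_le_self d _
  have hmled : m ≤ d := le_trans (by nlinarith [Nat.le_mul_of_pos_right m (show 0 < 4*r+1 by omega)] : m ≤ m * (4*r+1)) hmd
  have hdeg' : ∀ v : V, (@Finset.filter V (fun u => G.Adj v u)
      (fun a => Classical.propDecidable _) Finset.univ).card ≤ d := by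
    intro v
    have heq2 : (@Finset.filter V (fun u => G.Adj v u)
        (fun a => Classical.propDecidable _) Finset.univ) = G.neighborFinset v := by
      ext u
      simp [SimpleGraph.mem_neighborFinset]
    rw [heq2]
    exact hdeg v
  obtain ⟨dir, g, σ, h1, h2, h3, h4⟩ :=
    buildLemma G r d m hmd hcol hdeg' (Finset.univ : Finset V).card Finset.univ le_rfl
  -- the orientation
  set o : GraphOrientation G := {
    dir := dir
    consistent := by
      intro u v
      constructor
      · intro hadj
        by_cases hd : dir u v
        · exact Or.inl hd
        · right
          have := h2 v u (Finset.mem_univ v) (Finset.mem_univ u) hadj.symm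
          exact this.mpr hd
      · rintro (hd | hd)
        · exact (h1 u v hd).2.2
        · exact ((h1 v u hd).2.2).symm
    antisymm := by
      intro u v hd
      have hadj := (h1 u v hd).2.2
      exact (h2 u v (Finset.mem_univ u) (Finset.mem_univ v) hadj).mp hd } with ho
  have hodir : o.dir = dir := rfl
  -- out degrees
  have houtdeg : ∀ v, outDeg o v ≤ d - m := by
    intro v
    rw [outDeg, hodir, natcard_filter]
    exact h3 v
  -- the real bound
  have hqR : (0 : ℝ) < 4 * (r : ℝ) + 1 := by positivity
  have hdm : d < (m + 1) * q := by
    have hmod := Nat.div_add_mod d q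
    have hlt : d % q < q := Nat.mod_lt _ (by omega)
    have hexp : (m + 1) * q = q * (d / q) + q := by
      rw [hm]; ring
    omega
  have hdivR : (d : ℝ) < ((m : ℝ) + 1) * (4 * (r : ℝ) + 1) := by
    have : ((d : ℕ) : ℝ) < (((m + 1) * q : ℕ) : ℝ) := by exact_mod_cast hdm
    rw [hq] at this
    push_cast at this
    linarith
  have hcast : ((d - m : ℕ) : ℝ) = (d : ℝ) - (m : ℝ) := by
    rw [Nat.cast_sub hmled]
  have hRbound : ((d - m : ℕ) : ℝ) ≤ (1 - 1 / (4 * (r : ℝ) + 1)) * d + 1 := by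
    rw [hcast]
    have hexpand : (1 - 1 / (4 * (r : ℝ) + 1)) * d + 1
        = (d : ℝ) - (d : ℝ) / (4 * (r : ℝ) + 1) + 1 := by
      field_simp
    rw [hexpand]
    have : (d : ℝ) / (4 * (r : ℝ) + 1) < (m : ℝ) + 1 := by
      rw [div_lt_iff₀ hqR]
      linarith
    linarith
  -- no odd directed cycle
  have hnoodd : ¬ HasOddDirCycle o.dir := by
    rintro ⟨l, hcyc, hodd⟩
    cases l with
    | nil => exact hcyc.elim
    | cons v tl =>
      obtain ⟨_, hchain⟩ := hcyc
      rw [hodir] at hchain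
      have := chainSig h4 tl v v hchain le_rfl
      have hzero : ((tl.length + 1 : ℕ) : ZMod 2) = 0 := by
        have h := this
        have : σ v + 0 = σ v + ((tl.length + 1 : ℕ) : ZMod 2) := by
          rw [add_zero]; exact h
        exact (add_left_cancel this).symm
      have hdvd : 2 ∣ tl.length + 1 := (ZMod.natCast_eq_zero_iff _ _).mp hzero
      have hlen : (v :: tl).length = tl.length + 1 := rfl
      rw [hlen] at hodd
      rcases hodd with ⟨k, hk⟩
      omega
  -- all Eulerian subdigraphs are even
  have heuler : ∀ A : Finset (V × V), IsEulerian o A → Even A.card := by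
    intro A ⟨hmem, hbalN⟩
    apply eulerEven h4 A (fun p hp => hmem p hp)
    intro v
    have hb := hbalN v
    rwa [natcard_finset_filter, natcard_finset_filter] at hb
  have hEO : EO o = 0 := by
    rw [EO]
    have : IsEmpty {A : Finset (V × V) // IsEulerian o A ∧ Odd A.card} := by
      constructor
      rintro ⟨A, hE, hodd⟩
      exact (Nat.not_odd_iff_even.mpr (heuler A hE)) hodd
    exact Nat.card_of_isEmpty
  have hEE : 0 < EE o := by
    rw [EE]
    have hne : Nonempty {A : Finset (V × V) // IsEulerian o A ∧ Even A.card} := by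
      refine ⟨⟨(∅ : Finset (V × V)), ⟨?_, ?_⟩, by simp⟩⟩
      · intro p hp
        simp at hp
      · intro v
        rw [natcard_finset_filter, natcard_finset_filter]
        simp
    exact Nat.card_pos
  have hAT : AlonTarsiOrientation o := by
    rw [AlonTarsiOrientation, hEO]
    omega
  have hATle : ATNumber G ≤ d - m + 1 := by
    apply Nat.sInf_le
    exact ⟨o, fun v => lt_of_le_of_lt (houtdeg v) (Nat.lt_succ_self _), hAT⟩
  constructor
  · refine ⟨o, hnoodd, ?_⟩
    intro v
    have h5 : (outDeg o v : ℝ) ≤ ((d - m : ℕ) : ℝ) := by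
      exact_mod_cast houtdeg v
    calc (outDeg o v : ℝ) ≤ ((d - m : ℕ) : ℝ) := h5
      _ ≤ (1 - 1 / (4 * (r : ℝ) + 1)) * d + 1 := hRbound
  · have h5 : (ATNumber G : ℝ) ≤ ((d - m : ℕ) : ℝ) + 1 := by
      have := hATle
      have h6 : ((ATNumber G : ℕ) : ℝ) ≤ ((d - m + 1 : ℕ) : ℝ) := by exact_mod_cast this
      push_cast at h6 ⊢
      rw [hcast]
      rw [Nat.cast_sub hmled] at h6
      linarith
    calc (ATNumber G : ℝ) ≤ ((d - m : ℕ) : ℝ) + 1 := h5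
      _ ≤ (1 - 1 / (4 * (r : ℝ) + 1)) * d + 1 + 1 := by linarith [hRbound]
      _ = (1 - 1 / (4 * (r : ℝ) + 1)) * d + 2 := by ring
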